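/- Let $U$ be a unitary operator on a Hilbert space and $\omega \in \mathbb{D}$, and set $F(\omega) = (U+\omega)(U-\omega)^{-1}$, $G(\omega) = (U-\omega)^{-1}$. Then for any unit vector $e_j$, $\sum_k |\langle e_k, G(\omega) e_j\rangle|^2 = \|G(\omega)e_j\|^2 = \frac{1}{1-|\omega|^2} \mathrm{Re}\,\langle e_j, F(\omega) e_j \rangle$. -/

import Mathlib

/-- For a unitary `U` on a Hilbert space, `ω ∈ 𝔻`, `G(ω) = (U-ω)⁻¹` and
`F(ω) = (U+ω)(U-ω)⁻¹`, and a unit vector `e`: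
`∑_i |⟨b_i, G(ω)e⟩|² = ‖G(ω)e‖² = (1/(1-|ω|²)) Re⟨e, F(ω)e⟩`. -/
theorem stmt_18 {H : Type*} [NormedAddCommGroup H] [InnerProductSpace ℂ H]
    [CompleteSpace H] {ι : Type*} (b : HilbertBasis ι ℂ H)
    (U R : H →L[ℂ] H) (hU : ∀ x, ‖U x‖ = ‖x‖) (hUs : Function.Surjective U)
    (ω : ℂ) (hω : ‖ω‖ < 1)
    (h1 : (U - ω • ContinuousLinearMap.id ℂ H) ∘L R = ContinuousLinearMap.id ℂ H)
    (h2 : R ∘L (U - ω • ContinuousLinearMap.id ℂ H) = ContinuousLinearMap.id ℂ H)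
    (e : H) (he : ‖e‖ = 1) :
    (∑' i : ι, ‖(inner ℂ (b i) (R e) : ℂ)‖ ^ 2 = ‖R e‖ ^ 2) ∧
    ‖R e‖ ^ 2 = (1 / (1 - ‖ω‖ ^ 2)) *
      ((inner ℂ e (((U + ω • ContinuousLinearMap.id ℂ H) ∘L R) e) : ℂ)).re := by
  set x := R e with hx
  constructor
  · have h := (b.hasSum_inner_mul_inner x x).mapL Complex.reCLM
    have h' : HasSum (fun i : ι => ‖(inner ℂ (b i) x : ℂ)‖ ^ 2)
        ((inner ℂ x x : ℂ)).re := by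
      convert h using 2 with i
      rw [← inner_conj_symm x (b i), mul_comm, Complex.mul_conj']
      norm_cast
      exact (Complex.reCLM_apply _).symm
    rw [h'.tsum_eq]
    rw [inner_self_eq_norm_sq_to_K x]
    norm_cast
  · have hxe : (U - ω • ContinuousLinearMap.id ℂ H) x = e := by
      have := congrArg (fun T : H →L[ℂ] H => T e) h1
      simpa using this
    set z : ℂ := inner ℂ x (U x) with hz
    have hzre : (ω * starRingEnd ℂ z - starRingEnd ℂ ω * z).re = 0 := by
      simp only [Complex.sub_re, Complex.mul_re, Complex.conj_re, Complex.conj_im]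
      ring
    have h1' : (inner ℂ (U x) (U x) : ℂ) = ((‖x‖ ^ 2 : ℝ) : ℂ) := by
      rw [inner_self_eq_norm_sq_to_K, hU]; norm_cast
    have h2' : (inner ℂ x x : ℂ) = ((‖x‖ ^ 2 : ℝ) : ℂ) := by
      rw [inner_self_eq_norm_sq_to_K]; norm_cast
    have h3' : (inner ℂ (U x) x : ℂ) = starRingEnd ℂ z :=
      (inner_conj_symm (U x) x).symm
    have habs : starRingEnd ℂ ω * ω = ((‖ω‖ : ℝ) : ℂ) ^ 2 := by
      rw [mul_comm, Complex.mul_conj, Complex.normSq_eq_norm_sq]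
      push_cast
      ring
    have expand : (inner ℂ e (((U + ω • ContinuousLinearMap.id ℂ H) ∘L R) e) : ℂ)
        = ((‖x‖ ^ 2 - ‖ω‖ ^ 2 * ‖x‖ ^ 2 : ℝ) : ℂ)
          + (ω * starRingEnd ℂ z - starRingEnd ℂ ω * z) := by
      have hC : (inner ℂ e (((U + ω • ContinuousLinearMap.id ℂ H) ∘L R) e) : ℂ)
          = inner ℂ ((U - ω • ContinuousLinearMap.id ℂ H) x)
              ((U + ω • ContinuousLinearMap.id ℂ H) x) := by
        rw [hxe]; rfl
      rw [hC]
      simp only [ContinuousLinearMap.sub_apply, ContinuousLinearMap.add_apply,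
        ContinuousLinearMap.smul_apply, ContinuousLinearMap.id_apply]
      rw [inner_sub_left, inner_add_right, inner_add_right, inner_smul_left,
        inner_smul_right, inner_smul_left, inner_smul_right, h1', h2', h3', ← hz]
      push_cast
      linear_combination (-(‖x‖ : ℂ) ^ 2) * habs
    have key : ((inner ℂ e (((U + ω • ContinuousLinearMap.id ℂ H) ∘L R) e) : ℂ)).re
        = (1 - ‖ω‖ ^ 2) * ‖x‖ ^ 2 := by
      rw [expand, Complex.add_re, Complex.ofReal_re, hzre, add_zero]
      ring
    have hden : 1 - ‖ω‖ ^ 2 ≠ 0 := by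
      have h0 : ‖ω‖ ^ 2 < 1 := by
        nlinarith [norm_nonneg ω]
      nlinarith
    rw [key]
    field_simp
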